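/- Let p be a prime and β ∈ ℚ_p with |β|_p > 1, and suppose β is a root of an irreducible polynomial F(X) = X^n − a_1X^{n−1} − ⋯ − a_n ∈ ℚ[X] with all a_j ∈ ℤ[1/p] such that: (i) every root of F in ℂ has archimedean absolute value strictly less than 1 and |a_1|_p > 1 (so β is a Pisot–Chabauty number); (ii) |a_j|_p < |a_1|_p for all 2 ≤ j ≤ n; (iii) (−a_n, −a_{n−1}, …, −a_1) ∈ 𝒟_n^0. Then β satisfies the finiteness property (F): every z in the intersection of ℤ_p with the subring ℤ[1/p][β^{−1}] of ℚ_p (the smallest subring containing ℤ[1/p] and β^{−1}) has finite beta-expansion, i.e. T^k(z) = 0 for some k ≥ 0. -/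

import Mathlib

/-- The shift radix system map `τ̃_r(z_1,…,z_n) = (z_2,…,z_n, −⌊r·z⌋)`. -/
noncomputable def srsTauTilde {n : ℕ} (r : Fin n → ℝ) (z : Fin n → ℤ) : Fin n → ℤ :=
  fun i => if h : (i : ℕ) + 1 < n then z ⟨(i : ℕ) + 1, h⟩
           else -⌊∑ j, r j * (z j : ℝ)⌋

/-- The set `𝒟_n^0 = {r ∈ ℝ^n : every τ̃_r-orbit ends up in 0}`. -/
def Dn0 (n : ℕ) : Set (Fin n → ℝ) :=
  {r | ∀ z : Fin n → ℤ, ∃ k : ℕ, (srsTauTilde r)^[k] z = 0}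

namespace PadicFinAux

open Finset

/-- rationals with p-power denominator -/
def pden (p : ℕ) (q : ℚ) : Prop := ∃ m : ℤ, ∃ k : ℕ, q = (m : ℚ) / (p : ℚ) ^ k

set_option linter.unusedSectionVars false

variable {p : ℕ} [hp : Fact p.Prime]

lemma pQ_pos : (0:ℚ) < (p:ℚ) := by exact_mod_cast hp.out.pos
lemma pQ_ne : (p:ℚ) ≠ 0 := ne_of_gt pQ_pos
lemma pR_pos : (0:ℝ) < (p:ℝ) := by exact_mod_cast hp.out.pos
lemma pR_one_lt : (1:ℝ) < (p:ℝ) := by exact_mod_cast hp.out.one_lt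

lemma pden_int (z : ℤ) : pden p (z:ℚ) := ⟨z, 0, by simp⟩
lemma pden_zero : pden p 0 := by simpa using pden_int (p:=p) 0
lemma pden_one : pden p 1 := by simpa using pden_int (p:=p) 1

lemma pden_add {q r : ℚ} (hq : pden p q) (hr : pden p r) : pden p (q + r) := by
  obtain ⟨m1, k1, rfl⟩ := hq; obtain ⟨m2, k2, rfl⟩ := hr
  refine ⟨m1 * p ^ k2 + m2 * p ^ k1, k1 + k2, ?_⟩
  have h0 : (p:ℚ) ≠ 0 := pQ_ne
  push_cast
  rw [pow_add]
  field_simp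

lemma pden_neg {q : ℚ} (hq : pden p q) : pden p (-q) := by
  obtain ⟨m, k, rfl⟩ := hq; exact ⟨-m, k, by push_cast; ring⟩

lemma pden_sub {q r : ℚ} (hq : pden p q) (hr : pden p r) : pden p (q - r) := by
  simpa [sub_eq_add_neg] using pden_add hq (pden_neg hr)

lemma pden_mul {q r : ℚ} (hq : pden p q) (hr : pden p r) : pden p (q * r) := by
  obtain ⟨m1, k1, rfl⟩ := hq; obtain ⟨m2, k2, rfl⟩ := hr
  exact ⟨m1 * m2, k1 + k2, by push_cast; field_simp; ring⟩

lemma pden_sum {ι : Type*} (s : Finset ι) (f : ι → ℚ) (h : ∀ i ∈ s, pden p (f i)) :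
    pden p (∑ i ∈ s, f i) := by
  classical
  induction s using Finset.induction_on with
  | empty => simpa using pden_zero
  | insert _ _ hx ih =>
    rw [Finset.sum_insert hx]
    exact pden_add (h _ (mem_insert_self _ _)) (ih fun i hi => h i (mem_insert_of_mem hi))

lemma pden_norm_le {q : ℚ} (hq : pden p q) : ∃ K : ℕ, ‖(q : ℚ_[p])‖ ≤ (p:ℝ) ^ K := by
  obtain ⟨m, k, rfl⟩ := hq
  refine ⟨k, ?_⟩
  have : (((m:ℚ) / (p:ℚ)^k : ℚ) : ℚ_[p]) = (m : ℚ_[p]) / (p:ℚ_[p])^k := by push_cast; ring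
  rw [this, norm_div, norm_pow, Padic.norm_p]
  have h1 : ‖(m : ℚ_[p])‖ ≤ 1 := Padic.norm_int_le_one m
  have h2 : ((p:ℝ)⁻¹) ^ k = ((p:ℝ) ^ k)⁻¹ := by rw [inv_pow]
  rw [h2, div_inv_eq_mul]
  calc ‖(m : ℚ_[p])‖ * (p:ℝ)^k ≤ 1 * (p:ℝ)^k := by
        apply mul_le_mul_of_nonneg_right h1 (by positivity)
    _ = (p:ℝ)^k := one_mul _

lemma pden_int_of_norm_le {q : ℚ} (hq : pden p q) (h : ‖(q : ℚ_[p])‖ ≤ 1) :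
    ∃ z : ℤ, q = (z : ℚ) := by
  obtain ⟨m, k, rfl⟩ := hq
  have h0 : (p:ℚ) ≠ 0 := pQ_ne
  have hcast : ((((m:ℚ) / (p:ℚ)^k) : ℚ) : ℚ_[p]) * (p:ℚ_[p])^k = (m : ℚ_[p]) := by
    push_cast
    exact div_mul_cancel₀ _ (pow_ne_zero _ (by exact_mod_cast hp.out.ne_zero))
  have hnorm : ‖(m : ℚ_[p])‖ ≤ (p:ℝ) ^ (-(k:ℤ)) := by
    rw [← hcast, norm_mul, norm_pow, Padic.norm_p]
    have : ((p:ℝ)⁻¹) ^ k = (p:ℝ) ^ (-(k:ℤ)) := by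
      rw [inv_pow, ← zpow_natCast, ← zpow_neg]
    rw [this]
    calc ‖_‖ * (p:ℝ)^(-(k:ℤ)) ≤ 1 * (p:ℝ)^(-(k:ℤ)) := by
          apply mul_le_mul_of_nonneg_right h (by positivity)
      _ = _ := one_mul _
  have hdvd : ((p:ℤ) ^ k) ∣ m := (Padic.norm_int_le_pow_iff_dvd m k).1 hnorm
  obtain ⟨t, rfl⟩ := hdvd
  refine ⟨t, ?_⟩
  have h0' : ((p:ℚ))^k ≠ 0 := pow_ne_zero _ pQ_ne
  push_cast
  field_simp

/-- ultrametric bound for finite sums -/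
lemma norm_sum_le_max {ι : Type*} (s : Finset ι) (f : ι → ℚ_[p]) (C : ℝ) (hC : 0 ≤ C)
    (h : ∀ i ∈ s, ‖f i‖ ≤ C) : ‖∑ i ∈ s, f i‖ ≤ C := by
  classical
  induction s using Finset.induction_on with
  | empty => simpa using hC
  | insert _ _ hx ih =>
    rw [Finset.sum_insert hx]
    refine le_trans (Padic.nonarchimedean _ _) (max_le (h _ (mem_insert_self _ _))
      (ih fun i hi => h i (mem_insert_of_mem hi)))

/-- the dual basis elements -/
noncomputable def psi (β : ℚ_[p]) (a : ℕ → ℚ) (n j : ℕ) : ℚ_[p] :=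
  -β ^ (n - 1 - j) + ∑ t ∈ Finset.Icc 1 (n - 1 - j), ((a t : ℚ) : ℚ_[p]) * β ^ (n - 1 - j - t)

lemma psi_last (β : ℚ_[p]) (a : ℕ → ℚ) {n j : ℕ} (h : n - 1 ≤ j) : psi β a n j = -1 := by
  have h0 : n - 1 - j = 0 := by omega
  rw [psi, h0]
  simp

lemma beta_mul_psi (β : ℚ_[p]) (a : ℕ → ℚ) {n j : ℕ} (hj1 : 1 ≤ j) (hjn : j < n) :
    β * psi β a n j = psi β a n (j - 1) - ((a (n - j) : ℚ) : ℚ_[p]) := by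
  simp only [psi]
  have h1 : n - 1 - (j - 1) = n - j := by omega
  have h2 : n - 1 - j + 1 = n - j := by omega
  have h3 : 1 ≤ n - j := by omega
  have h4 : n - j - 1 = n - 1 - j := by omega
  have hs : ∑ t ∈ Icc 1 (n - j), ((a t : ℚ) : ℚ_[p]) * β ^ (n - j - t)
      = (∑ t ∈ Icc 1 (n - 1 - j), ((a t : ℚ) : ℚ_[p]) * β ^ (n - j - t))
        + ((a (n - j) : ℚ) : ℚ_[p]) * β ^ (n - j - (n - j)) := by
    conv_lhs => rw [← h2]
    rw [Finset.sum_Icc_succ_top (by omega : 1 ≤ n - 1 - j + 1), h2]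
  have h5 : β * β ^ (n - 1 - j) = β ^ (n - j) := by rw [← pow_succ', h2]
  have h6 : ∑ t ∈ Icc 1 (n - 1 - j), ((a t : ℚ) : ℚ_[p]) * β ^ (n - j - t)
      = ∑ t ∈ Icc 1 (n - 1 - j), β * (((a t : ℚ) : ℚ_[p]) * β ^ (n - 1 - j - t)) := by
    refine Finset.sum_congr rfl (fun t ht => ?_)
    obtain ⟨ht1, ht2⟩ := mem_Icc.1 ht
    have h7 : n - 1 - j - t + 1 = n - j - t := by omega
    rw [← h7, pow_succ]
    ring
  rw [h1, hs, mul_add, mul_neg, h5, Finset.mul_sum, ← h6]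
  have h8 : n - j - (n - j) = 0 := by omega
  rw [h8, pow_zero, mul_one]
  ring

lemma beta_mul_psi0 (β : ℚ_[p]) (a : ℕ → ℚ) {n : ℕ} (hn : 1 ≤ n)
    (hrootEq : β ^ n = ∑ t ∈ Finset.Icc 1 n, ((a t : ℚ) : ℚ_[p]) * β ^ (n - t)) :
    β * psi β a n 0 = -((a n : ℚ) : ℚ_[p]) := by
  simp only [psi]
  have h1 : n - 1 - 0 = n - 1 := by omega
  have h2' : n - 1 + 1 = n := by omega
  have h5 : β * β ^ (n - 1) = β ^ n := by rw [← pow_succ', h2']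
  have h6 : ∑ t ∈ Icc 1 (n - 1), ((a t : ℚ) : ℚ_[p]) * β ^ (n - t)
      = ∑ t ∈ Icc 1 (n - 1), β * (((a t : ℚ) : ℚ_[p]) * β ^ (n - 1 - t)) := by
    refine Finset.sum_congr rfl (fun t ht => ?_)
    obtain ⟨ht1, ht2⟩ := mem_Icc.1 ht
    have h7 : n - 1 - t + 1 = n - t := by omega
    rw [← h7, pow_succ]
    ring
  have h2 : n - 1 + 1 = n := by omega
  have h8 : β ^ n = ∑ t ∈ Icc 1 (n - 1), ((a t : ℚ) : ℚ_[p]) * β ^ (n - t)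
      + ((a n : ℚ) : ℚ_[p]) := by
    conv_lhs => rw [hrootEq, ← h2]
    rw [Finset.sum_Icc_succ_top (by omega : 1 ≤ n - 1 + 1), h2]
    have : n - n = 0 := by omega
    rw [this, pow_zero, mul_one]
  rw [h1, mul_add, mul_neg, h5, Finset.mul_sum, ← h6, h8]
  ring

section norms

variable {β : ℚ_[p]} {a : ℕ → ℚ} {n : ℕ}

lemma norm_sub_le_max (x y : ℚ_[p]) : ‖x - y‖ ≤ max ‖x‖ ‖y‖ := by
  rw [sub_eq_add_neg]
  simpa [norm_neg] using Padic.nonarchimedean x (-y)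

lemma psi_norm_small (hβ : 1 < ‖β‖) (hn : 1 ≤ n)
    (hrootEq : β ^ n = ∑ t ∈ Finset.Icc 1 n, ((a t : ℚ) : ℚ_[p]) * β ^ (n - t))
    (hajA : ∀ j, 2 ≤ j → j ≤ n → ‖((a j : ℚ) : ℚ_[p])‖ * p ≤ ‖β‖) :
    ∀ j, j + 1 < n → ‖psi β a n j‖ ≤ (p : ℝ)⁻¹ := by
  have hβpos : (0:ℝ) < ‖β‖ := lt_trans one_pos hβ
  have hppos : (0:ℝ) < (p:ℝ)⁻¹ := by
    have := pR_pos (p := p); positivity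
  have haux : ∀ j, 2 ≤ j → j ≤ n → ‖((a j : ℚ) : ℚ_[p])‖ ≤ (p:ℝ)⁻¹ * ‖β‖ := by
    intro j h2 h3
    have := hajA j h2 h3
    rw [mul_comm]
    rw [← le_div_iff₀ (pR_pos (p := p))] at this
    simpa [div_eq_mul_inv] using this
  intro j
  induction j with
  | zero =>
    intro h0
    have key : ‖β * psi β a n 0‖ = ‖((a n : ℚ) : ℚ_[p])‖ := by
      rw [beta_mul_psi0 β a hn hrootEq, norm_neg]
    have h1 : ‖β‖ * ‖psi β a n 0‖ ≤ (p:ℝ)⁻¹ * ‖β‖ := by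
      rw [← norm_mul, key]
      exact haux n (by omega) le_rfl
    rw [mul_comm] at h1
    have := (mul_le_mul_iff_of_pos_right hβpos).1 h1
    exact this
  | succ j ih =>
    intro h0
    have hrel := beta_mul_psi β a (by omega : 1 ≤ j + 1) (by omega : j + 1 < n)
    have hsmall : ‖psi β a n j‖ ≤ (p:ℝ)⁻¹ := ih (by omega)
    have key : ‖β * psi β a n (j+1)‖ ≤ (p:ℝ)⁻¹ * ‖β‖ := by
      rw [hrel]
      have h9 : j + 1 - 1 = j := by omega
      rw [h9]
      refine le_trans (norm_sub_le_max _ _) (max_le ?_ ?_)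
      · calc ‖psi β a n j‖ ≤ (p:ℝ)⁻¹ := hsmall
          _ = (p:ℝ)⁻¹ * 1 := (mul_one _).symm
          _ ≤ (p:ℝ)⁻¹ * ‖β‖ := by
              apply mul_le_mul_of_nonneg_left (le_of_lt hβ) (le_of_lt hppos)
      · exact haux (n - (j+1)) (by omega) (by omega)
    rw [norm_mul, mul_comm] at key
    exact (mul_le_mul_iff_of_pos_right hβpos).1 key

lemma psi_norm_le_one (hβ : 1 < ‖β‖) (hn : 1 ≤ n)
    (hrootEq : β ^ n = ∑ t ∈ Finset.Icc 1 n, ((a t : ℚ) : ℚ_[p]) * β ^ (n - t))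
    (hajA : ∀ j, 2 ≤ j → j ≤ n → ‖((a j : ℚ) : ℚ_[p])‖ * p ≤ ‖β‖) :
    ∀ j, ‖psi β a n j‖ ≤ 1 := by
  intro j
  by_cases h : n - 1 ≤ j
  · rw [psi_last β a h]; simp
  · refine le_trans (psi_norm_small hβ hn hrootEq hajA j (by omega)) ?_
    rw [inv_le_one_iff₀]
    right
    exact le_of_lt (pR_one_lt (p := p))

end norms



noncomputable def Phi (β : ℚ_[p]) (a : ℕ → ℚ) (n : ℕ) (c : ℕ → ℚ) : ℚ_[p] :=
  ∑ j ∈ Finset.range n, ((c j : ℚ) : ℚ_[p]) * psi β a n j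

def shiftc (n : ℕ) (c : ℕ → ℚ) : ℕ → ℚ := fun j => if j + 1 < n then c (j + 1) else 0


lemma beta_mul_Phi (β : ℚ_[p]) (a : ℕ → ℚ) {n : ℕ} (hn : 1 ≤ n)
    (hrootEq : β ^ n = ∑ t ∈ Finset.Icc 1 n, ((a t : ℚ) : ℚ_[p]) * β ^ (n - t))
    (c : ℕ → ℚ) :
    β * Phi β a n c
      = Phi β a n (shiftc n c) - ((∑ j ∈ Finset.range n, a (n - j) * c j : ℚ) : ℚ_[p]) := by
  obtain ⟨m, rfl⟩ : ∃ m, n = m + 1 := ⟨n - 1, by omega⟩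
  simp only [Phi, shiftc]
  rw [Finset.mul_sum]
  have hterm : ∀ j ∈ Finset.range (m+1),
      β * (((c j : ℚ) : ℚ_[p]) * psi β a (m+1) j)
      = ((c j : ℚ) : ℚ_[p]) * (if j = 0 then 0 else psi β a (m+1) (j-1))
        - ((a (m+1-j) * c j : ℚ) : ℚ_[p]) := by
    intro j hj
    rcases Nat.eq_zero_or_pos j with h0 | h1
    · subst h0
      rw [if_pos rfl,
        show β * (((c 0 : ℚ) : ℚ_[p]) * psi β a (m+1) 0)
          = ((c 0 : ℚ) : ℚ_[p]) * (β * psi β a (m+1) 0) by ring,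
        beta_mul_psi0 β a (by omega) hrootEq]
      push_cast
      ring
    · rw [if_neg (by omega),
        show β * (((c j : ℚ) : ℚ_[p]) * psi β a (m+1) j)
          = ((c j : ℚ) : ℚ_[p]) * (β * psi β a (m+1) j) by ring,
        beta_mul_psi β a h1 (Finset.mem_range.1 hj)]
      push_cast
      ring
  rw [Finset.sum_congr rfl hterm, Finset.sum_sub_distrib]
  congr 1
  · rw [Finset.sum_range_succ'
      (fun j => ((c j : ℚ) : ℚ_[p]) * (if j = 0 then 0 else psi β a (m+1) (j-1))) m]
    rw [Finset.sum_range_succ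
      (fun j => (((if j + 1 < m + 1 then c (j+1) else 0 : ℚ)) : ℚ_[p]) * psi β a (m+1) j) m]
    simp only [Nat.add_sub_cancel, Nat.succ_ne_zero, lt_irrefl, if_false, if_true,
      ite_false, ite_true, Rat.cast_zero, mul_zero, zero_mul, add_zero]
    refine Finset.sum_congr rfl (fun i hi => ?_)
    rw [if_pos (by have := Finset.mem_range.1 hi; omega : i + 1 < m + 1)]
  · push_cast
    ring_nf

variable {p : ℕ} [hp : Fact p.Prime] {β : ℚ_[p]} {a : ℕ → ℚ} {n : ℕ}

lemma digit_uniq {d e : ℚ} (hd : pden p d) (he : pden p e) (hd0 : 0 ≤ d) (hd1 : d < 1)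
    (he0 : 0 ≤ e) (he1 : e < 1) {x1 x2 : ℚ_[p]} (h1 : ‖x1‖ ≤ 1) (h2 : ‖x2‖ ≤ 1)
    (heq : x1 + ((d : ℚ) : ℚ_[p]) = x2 + ((e : ℚ) : ℚ_[p])) : d = e ∧ x1 = x2 := by
  have hsub : (((d - e : ℚ)) : ℚ_[p]) = x2 - x1 := by
    push_cast
    linear_combination heq
  have hnle : ‖(((d - e : ℚ)) : ℚ_[p])‖ ≤ 1 := by
    rw [hsub]
    exact le_trans (norm_sub_le_max x2 x1) (max_le h2 h1)
  obtain ⟨z, hz⟩ := pden_int_of_norm_le (pden_sub hd he) hnle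
  have hz0 : z = 0 := by
    have b1 : (z : ℚ) < 1 := by rw [← hz]; linarith
    have b2 : (-1 : ℚ) < (z : ℚ) := by rw [← hz]; linarith
    have b1' : z < 1 := by exact_mod_cast b1
    have b2' : -1 < z := by exact_mod_cast b2
    omega
  have hde : d = e := by
    rw [hz0] at hz
    push_cast at hz
    linarith
  refine ⟨hde, ?_⟩
  rw [hde] at heq
  exact add_right_cancel heq

lemma Phi_add (c c' : ℕ → ℚ) :
    Phi β a n (fun j => c j + c' j) = Phi β a n c + Phi β a n c' := by
  simp only [Phi]
  rw [← Finset.sum_add_distrib]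
  refine Finset.sum_congr rfl (fun j _ => ?_)
  push_cast
  ring

lemma Phi_single (hn : 1 ≤ n) (q : ℚ) :
    Phi β a n (fun j => if j = n - 1 then q else 0) = -((q : ℚ) : ℚ_[p]) := by
  simp only [Phi]
  have : ∀ j ∈ Finset.range n,
      (((if j = n - 1 then q else 0 : ℚ)) : ℚ_[p]) * psi β a n j
      = if j = n - 1 then ((q:ℚ):ℚ_[p]) * psi β a n j else 0 := by
    intro j _
    by_cases h : j = n - 1 <;> simp [h]
  rw [Finset.sum_congr rfl this, Finset.sum_ite_eq' (Finset.range n) (n-1)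
    (fun j => ((q:ℚ):ℚ_[p]) * psi β a n j)]
  rw [if_pos (Finset.mem_range.2 (by omega)), psi_last β a (le_refl _)]
  ring

/-- the span of the psi's with p-power-denominator rational coefficients -/
def Wset (β : ℚ_[p]) (a : ℕ → ℚ) (n : ℕ) : Set ℚ_[p] :=
  {x | ∃ c : ℕ → ℚ, (∀ j, pden p (c j)) ∧ x = Phi β a n c}

lemma W_add {x y : ℚ_[p]} (hx : x ∈ Wset β a n) (hy : y ∈ Wset β a n) :
    x + y ∈ Wset β a n := by
  obtain ⟨c, hc, rfl⟩ := hx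
  obtain ⟨c', hc', rfl⟩ := hy
  exact ⟨fun j => c j + c' j, fun j => pden_add (hc j) (hc' j), (Phi_add c c').symm⟩

lemma W_zero : (0 : ℚ_[p]) ∈ Wset β a n :=
  ⟨fun _ => 0, fun _ => pden_zero, by simp [Phi]⟩

lemma W_smul {q : ℚ} (hq : pden p q) {x : ℚ_[p]} (hx : x ∈ Wset β a n) :
    ((q : ℚ) : ℚ_[p]) * x ∈ Wset β a n := by
  obtain ⟨c, hc, rfl⟩ := hx
  refine ⟨fun j => q * c j, fun j => pden_mul hq (hc j), ?_⟩
  simp only [Phi, Finset.mul_sum]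
  refine Finset.sum_congr rfl (fun j _ => ?_)
  push_cast
  ring

lemma W_neg {x : ℚ_[p]} (hx : x ∈ Wset β a n) : -x ∈ Wset β a n := by
  have := W_smul (q := -1) (pden_neg pden_one) hx
  simpa using this

lemma W_rat (hn : 1 ≤ n) {q : ℚ} (hq : pden p q) : ((q : ℚ) : ℚ_[p]) ∈ Wset β a n := by
  refine ⟨fun j => if j = n - 1 then -q else 0,
    fun j => by by_cases h : j = n - 1 <;> simp [h, pden_neg hq, pden_zero], ?_⟩
  rw [Phi_single hn]
  push_cast
  ring

lemma W_sum {ι : Type*} (s : Finset ι) (f : ι → ℚ_[p]) (h : ∀ i ∈ s, f i ∈ Wset β a n) :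
    (∑ i ∈ s, f i) ∈ Wset β a n := by
  classical
  induction s using Finset.induction_on with
  | empty => simpa using W_zero
  | insert _ _ hx ih =>
    rw [Finset.sum_insert hx]
    exact W_add (h _ (mem_insert_self _ _)) (ih fun i hi => h i (mem_insert_of_mem hi))

section Wring
variable (hn : 1 ≤ n)
  (hrootEq : β ^ n = ∑ t ∈ Finset.Icc 1 n, ((a t : ℚ) : ℚ_[p]) * β ^ (n - t))
  (haZ' : ∀ j, 1 ≤ j → j ≤ n → pden p (a j))

include hn hrootEq haZ'

lemma W_beta {x : ℚ_[p]} (hx : x ∈ Wset β a n) : β * x ∈ Wset β a n := by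
  obtain ⟨c, hc, rfl⟩ := hx
  rw [beta_mul_Phi β a hn hrootEq c]
  have hs : pden p (∑ j ∈ Finset.range n, a (n - j) * c j) := by
    refine pden_sum _ _ (fun j hj => ?_)
    have hj' := Finset.mem_range.1 hj
    exact pden_mul (haZ' (n - j) (by omega) (by omega)) (hc j)
  rw [sub_eq_add_neg]
  refine W_add ⟨shiftc n c, fun j => ?_, rfl⟩ ?_
  · by_cases h : j + 1 < n <;> simp [shiftc, h, hc (j+1), pden_zero]
  · have := W_rat (β := β) (a := a) hn (pden_neg hs)
    rw [Rat.cast_neg] at this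
    exact this

lemma W_pow : ∀ k : ℕ, (β ^ k : ℚ_[p]) ∈ Wset β a n := by
  intro k
  induction k with
  | zero => simpa using W_rat (β := β) (a := a) hn (pden_one (p := p))
  | succ k ih =>
    rw [pow_succ, mul_comm]
    exact W_beta hn hrootEq haZ' ih

lemma W_pow_mul {x : ℚ_[p]} (hx : x ∈ Wset β a n) : ∀ k : ℕ, (β ^ k * x : ℚ_[p]) ∈ Wset β a n := by
  intro k
  induction k with
  | zero => simpa using hx
  | succ k ih =>
    rw [pow_succ, mul_comm (β ^ k) β, mul_assoc]
    exact W_beta hn hrootEq haZ' ih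

lemma W_psi_mul {x : ℚ_[p]} (hx : x ∈ Wset β a n) (j : ℕ) :
    (psi β a n j * x : ℚ_[p]) ∈ Wset β a n := by
  rw [psi, add_mul, neg_mul, Finset.sum_mul]
  refine W_add (W_neg (W_pow_mul hn hrootEq haZ' hx _)) (W_sum _ _ (fun t ht => ?_))
  obtain ⟨ht1, ht2⟩ := Finset.mem_Icc.1 ht
  rw [mul_assoc]
  exact W_smul (haZ' t ht1 (by omega)) (W_pow_mul hn hrootEq haZ' hx _)

lemma W_mul {x y : ℚ_[p]} (hx : x ∈ Wset β a n) (hy : y ∈ Wset β a n) :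
    x * y ∈ Wset β a n := by
  obtain ⟨c, hc, rfl⟩ := hx
  rw [Phi, Finset.sum_mul]
  refine W_sum _ _ (fun j _ => ?_)
  rw [mul_assoc]
  exact W_smul (hc j) (W_psi_mul hn hrootEq haZ' hy j)

end Wring

section Dynamics

variable {T : ℚ_[p] → ℚ_[p]}
variable (hn : 1 ≤ n) (hβ : 1 < ‖β‖)
  (hrootEq : β ^ n = ∑ t ∈ Finset.Icc 1 n, ((a t : ℚ) : ℚ_[p]) * β ^ (n - t))
  (hajA : ∀ j, 2 ≤ j → j ≤ n → ‖((a j : ℚ) : ℚ_[p])‖ * p ≤ ‖β‖)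
  (haZ' : ∀ j, 1 ≤ j → j ≤ n → pden p (a j))
  (hT : ∀ z : ℚ_[p], ‖z‖ ≤ 1 → ‖T z‖ ≤ 1 ∧
      ∃ d : ℚ, 0 ≤ d ∧ d < 1 ∧ pden p d ∧ β * z = T z + ((d : ℚ) : ℚ_[p]))

include hn hβ hrootEq hajA haZ' hT

lemma step_lemma (c : ℕ → ℚ) (hc : ∀ j, pden p (c j)) (hball : ‖Phi β a n c‖ ≤ 1) :
    ∃ c' : ℕ → ℚ, (∀ j, pden p (c' j)) ∧ T (Phi β a n c) = Phi β a n c'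
      ∧ (∀ j, j + 1 < n → c' j = c (j + 1))
      ∧ ∀ B : ℝ, 1 ≤ B → (∀ j, 1 ≤ j → j < n → ‖((c j : ℚ) : ℚ_[p])‖ ≤ B) →
          ‖((c' (n - 1) : ℚ) : ℚ_[p])‖ ≤ max 1 (B * (p : ℝ)⁻¹) := by
  obtain ⟨hTy, d, hd0, hd1, hdp, hbe⟩ := hT _ hball
  set s : ℚ := ∑ j ∈ Finset.range n, a (n - j) * c j with hsdef
  have hs : pden p s := by
    refine pden_sum _ _ (fun j hj => ?_)
    have hj' := Finset.mem_range.1 hj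
    exact pden_mul (haZ' (n - j) (by omega) (by omega)) (hc j)
  set c' : ℕ → ℚ := fun j => shiftc n c j + (if j = n - 1 then s + d else 0) with hc'def
  have hc' : ∀ j, pden p (c' j) := by
    intro j
    refine pden_add ?_ ?_
    · by_cases h : j + 1 < n <;> simp [shiftc, h, hc (j+1), pden_zero]
    · by_cases h : j = n - 1 <;> simp [h, pden_add hs hdp, pden_zero]
  have heq : T (Phi β a n c) = Phi β a n c' := by
    have hTtr : T (Phi β a n c) = β * Phi β a n c - ((d : ℚ) : ℚ_[p]) :=
      eq_sub_of_add_eq hbe.symm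
    rw [hTtr, beta_mul_Phi β a hn hrootEq c, hc'def, Phi_add, Phi_single hn]
    push_cast [hsdef]
    ring
  have hshift : ∀ j, j + 1 < n → c' j = c (j + 1) := by
    intro j hj
    rw [hc'def]
    simp only [shiftc, if_pos hj, if_neg (by omega : ¬ j = n - 1), add_zero]
  refine ⟨c', hc', heq, hshift, ?_⟩
  intro B hB hcb
  have hlast : ((c' (n-1) : ℚ) : ℚ_[p])
      = (∑ j ∈ Finset.range (n-1), ((c' j : ℚ) : ℚ_[p]) * psi β a n j) - T (Phi β a n c) := by
    have hidx : n = (n-1) + 1 := by omega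
    have hsp := Finset.sum_range_succ (fun j => ((c' j : ℚ) : ℚ_[p]) * psi β a n j) (n-1)
    have hrw : ∑ j ∈ Finset.range n, ((c' j : ℚ) : ℚ_[p]) * psi β a n j
        = ∑ j ∈ Finset.range ((n-1)+1), ((c' j : ℚ) : ℚ_[p]) * psi β a n j := by
      rw [← hidx]
    rw [heq, Phi, hrw, hsp, psi_last β a (le_refl (n-1))]
    ring
  rw [hlast]
  refine le_trans (norm_sub_le_max _ _) (max_le ?_ (le_trans hTy (le_max_left _ _)))
  refine norm_sum_le_max _ _ _ (le_trans zero_le_one (le_max_left _ _)) (fun j hj => ?_)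
  have hj' := Finset.mem_range.1 hj
  rw [norm_mul]
  have h1 : ‖((c' j : ℚ) : ℚ_[p])‖ ≤ B := by
    rw [hshift j (by omega)]
    exact hcb (j+1) (by omega) (by omega)
  have h2 : ‖psi β a n j‖ ≤ (p:ℝ)⁻¹ := psi_norm_small hβ hn hrootEq hajA j (by omega)
  refine le_trans (mul_le_mul h1 h2 (norm_nonneg _) (le_trans zero_le_one hB)) ?_
  exact le_max_right _ _


omit hn hβ hrootEq hajA haZ' hT

/-- integer vectors as coordinate functions -/
def cv (n : ℕ) (v : Fin n → ℤ) : ℕ → ℚ := fun j => if h : j < n then ((v ⟨j, h⟩ : ℤ) : ℚ) else 0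

lemma cv_pden (v : Fin n → ℤ) : ∀ j, pden p (cv n v j) := by
  intro j
  unfold cv
  split
  · exact pden_int _
  · exact pden_zero

lemma cv_norm (v : Fin n → ℤ) : ∀ j, ‖((cv n v j : ℚ) : ℚ_[p])‖ ≤ 1 := by
  intro j
  unfold cv
  split
  · rw [show (((((v ⟨j, by assumption⟩ : ℤ) : ℚ)) : ℚ_[p])) = ((v ⟨j, by assumption⟩ : ℤ) : ℚ_[p])
      by push_cast; ring]
    exact Padic.norm_int_le_one _
  · simp

include hn hβ hrootEq hajA

lemma cv_ball (v : Fin n → ℤ) : ‖Phi β a n (cv n v)‖ ≤ 1 := by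
  refine norm_sum_le_max _ _ _ zero_le_one (fun j _ => ?_)
  rw [norm_mul]
  calc ‖((cv n v j : ℚ) : ℚ_[p])‖ * ‖psi β a n j‖ ≤ 1 * 1 :=
        mul_le_mul (cv_norm v j) (psi_norm_le_one hβ hn hrootEq hajA j) (norm_nonneg _)
          zero_le_one
    _ = 1 := one_mul _

include haZ' hT

lemma conj_step (v : Fin n → ℤ) :
    T (Phi β a n (cv n v)) =
    Phi β a n (cv n (srsTauTilde (fun i : Fin n => ((-(a (n - (i : ℕ))) : ℚ) : ℝ)) v)) := by
  have hball : ‖Phi β a n (cv n v)‖ ≤ 1 := cv_ball hn hβ hrootEq hajA v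
  obtain ⟨hTy, d, hd0, hd1, hdp, hbe⟩ := hT _ hball
  set s : ℚ := ∑ j ∈ Finset.range n, a (n - j) * cv n v j with hsdef
  have hs : pden p s := by
    refine pden_sum _ _ (fun j hj => ?_)
    have hj' := Finset.mem_range.1 hj
    exact pden_mul (haZ' (n - j) (by omega) (by omega)) (cv_pden v j)
  have hcore : β * Phi β a n (cv n v)
      = Phi β a n (shiftc n (cv n v)) - ((s : ℚ) : ℚ_[p]) :=
    beta_mul_Phi β a hn hrootEq (cv n v)
  set r : Fin n → ℝ := fun i : Fin n => ((-(a (n - (i : ℕ))) : ℚ) : ℝ) with hrdef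
  set w : Fin n → ℤ := srsTauTilde r v with hwdef
  have hsum : (∑ j : Fin n, r j * ((v j : ℤ) : ℝ)) = ((-s : ℚ) : ℝ) := by
    have h1 : ∀ i : Fin n, r i * ((v i : ℤ) : ℝ)
        = (fun j : ℕ => ((-(a (n - j)) * cv n v j : ℚ) : ℝ)) (i : ℕ) := by
      intro i
      simp only [hrdef, cv, dif_pos i.isLt, Fin.eta]
      push_cast
      ring
    rw [Finset.sum_congr rfl (fun i _ => h1 i),
      Fin.sum_univ_eq_sum_range (fun j : ℕ => ((-(a (n - j)) * cv n v j : ℚ) : ℝ)) n]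
    rw [hsdef]
    push_cast
    rw [← Finset.sum_neg_distrib]
    exact Finset.sum_congr rfl (fun x _ => by ring)
  have hcvw : ∀ j, cv n w j
      = shiftc n (cv n v) j + (if j = n - 1 then ((-⌊(-s : ℚ)⌋ : ℤ) : ℚ) else 0) := by
    intro j
    by_cases hjn : j < n
    · by_cases hj1 : j + 1 < n
      · rw [if_neg (by omega : ¬ j = n - 1), add_zero]
        simp only [cv, shiftc, dif_pos hjn, if_pos hj1, hwdef, srsTauTilde]
        rw [dif_pos (show ((⟨j, hjn⟩ : Fin n) : ℕ) + 1 < n from hj1)]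
        rw [dif_pos hj1]
      · have hj : j = n - 1 := by omega
        subst hj
        rw [if_pos rfl]
        simp only [cv, shiftc, dif_pos hjn, if_neg hj1, hwdef, srsTauTilde]
        rw [dif_neg (show ¬ ((⟨n-1, hjn⟩ : Fin n) : ℕ) + 1 < n from hj1)]
        rw [zero_add]
        congr 2
        rw [hsum]
        exact Rat.floor_cast (-s)
    · rw [if_neg (by omega : ¬ j = n - 1), add_zero]
      simp only [cv, shiftc, dif_neg hjn, if_neg (show ¬ j + 1 < n by omega)]
  have hPhiw : Phi β a n (cv n w)
      = Phi β a n (shiftc n (cv n v)) + -(((((-⌊(-s : ℚ)⌋ : ℤ) : ℚ)) : ℚ_[p])) := by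
    rw [show cv n w = fun j => shiftc n (cv n v) j
        + (if j = n - 1 then ((-⌊(-s : ℚ)⌋ : ℤ) : ℚ) else 0) from funext hcvw,
      Phi_add, Phi_single hn]
  set e : ℚ := -s - ⌊(-s : ℚ)⌋ with hedef
  have he0 : 0 ≤ e := sub_nonneg.2 (Int.floor_le _)
  have he1 : e < 1 := by
    have := Int.lt_floor_add_one (-s)
    rw [hedef]
    push_cast
    linarith
  have hep : pden p e := pden_sub (pden_neg hs) (pden_int _)
  have hkey : T (Phi β a n (cv n v)) + ((d : ℚ) : ℚ_[p])
      = Phi β a n (cv n w) + ((e : ℚ) : ℚ_[p]) := by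
    rw [← hbe, hcore, hPhiw, hedef]
    push_cast
    ring
  exact (digit_uniq hdp hep hd0 hd1 he0 he1 hTy (cv_ball hn hβ hrootEq hajA w) hkey).2

lemma conj_iter (v : Fin n → ℤ) : ∀ k : ℕ,
    T^[k] (Phi β a n (cv n v))
      = Phi β a n (cv n ((srsTauTilde (fun i : Fin n => ((-(a (n - (i : ℕ))) : ℚ) : ℝ)))^[k] v)) := by
  intro k
  induction k with
  | zero => rfl
  | succ k ih =>
    rw [Function.iterate_succ_apply', ih,
      conj_step hn hβ hrootEq hajA haZ' hT,
      ← Function.iterate_succ_apply'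
        (srsTauTilde (fun i : Fin n => ((-(a (n - (i : ℕ))) : ℚ) : ℝ))) k v]

lemma int_reach
    (hsrs : (fun i : Fin n => ((-(a (n - (i : ℕ))) : ℚ) : ℝ)) ∈ Dn0 n)
    (v : Fin n → ℤ) : ∃ k : ℕ, T^[k] (Phi β a n (cv n v)) = 0 := by
  obtain ⟨k, hk⟩ := hsrs v
  refine ⟨k, ?_⟩
  rw [conj_iter hn hβ hrootEq hajA haZ' hT v k, hk]
  simp [Phi, cv]

lemma reach
    (hsrs : (fun i : Fin n => ((-(a (n - (i : ℕ))) : ℚ) : ℝ)) ∈ Dn0 n) :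
    ∀ K : ℕ, ∀ c : ℕ → ℚ, (∀ j, pden p (c j)) →
      (∀ j, j < n → ‖((c j : ℚ) : ℚ_[p])‖ ≤ (p : ℝ) ^ K) →
      ‖Phi β a n c‖ ≤ 1 → ∃ k : ℕ, T^[k] (Phi β a n c) = 0 := by
  intro K
  induction K with
  | zero =>
    intro c hc hb hball
    have hint : ∀ i : Fin n, ∃ z : ℤ, c (i : ℕ) = (z : ℚ) := by
      intro i
      refine pden_int_of_norm_le (hc _) ?_
      simpa using hb (i : ℕ) i.isLt
    set v : Fin n → ℤ := fun i => Classical.choose (hint i) with hvdef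
    have hveq : ∀ i : Fin n, c (i : ℕ) = ((v i : ℤ) : ℚ) := fun i => Classical.choose_spec (hint i)
    have hPhiEq : Phi β a n c = Phi β a n (cv n v) := by
      refine Finset.sum_congr rfl (fun j hj => ?_)
      have hj' := Finset.mem_range.1 hj
      rw [show cv n v j = c j by
        rw [cv, dif_pos hj']
        exact (hveq ⟨j, hj'⟩).symm]
    rw [hPhiEq]
    exact int_reach hn hβ hrootEq hajA haZ' hT hsrs v
  | succ K ih =>
    intro c hc hb hball
    have hK1 : (1:ℝ) ≤ (p:ℝ) ^ (K + 1) := one_le_pow₀ (le_of_lt (pR_one_lt (p := p)))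
    have hKk : (1:ℝ) ≤ (p:ℝ) ^ K := one_le_pow₀ (le_of_lt (pR_one_lt (p := p)))
    have hdrop : (p:ℝ) ^ (K+1) * (p:ℝ)⁻¹ = (p:ℝ) ^ K := by
      rw [pow_succ]
      field_simp
      exact div_self (pR_pos (p := p)).ne'
    have pass : ∀ m, m ≤ n → ∃ c' : ℕ → ℚ, (∀ j, pden p (c' j))
        ∧ T^[m] (Phi β a n c) = Phi β a n c' ∧ ‖Phi β a n c'‖ ≤ 1
        ∧ (∀ j, j < n → ‖((c' j : ℚ) : ℚ_[p])‖ ≤ (p : ℝ) ^ (K+1))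
        ∧ (∀ j, j < n → n ≤ j + m → ‖((c' j : ℚ) : ℚ_[p])‖ ≤ (p : ℝ) ^ K) := by
      intro m
      induction m with
      | zero =>
        intro _
        exact ⟨c, hc, rfl, hball, hb, fun j h1 h2 => absurd h2 (by omega)⟩
      | succ m ihm =>
        intro hm
        obtain ⟨c', hc', hit, hball', hb1, hb2⟩ := ihm (by omega)
        obtain ⟨c'', hc'', heq, hshift, hbound⟩ :=
          step_lemma hn hβ hrootEq hajA haZ' hT c' hc' hball'
        have hit' : T^[m+1] (Phi β a n c) = Phi β a n c'' := by
          rw [Function.iterate_succ_apply', hit, heq]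
        have hball'' : ‖Phi β a n c''‖ ≤ 1 := by
          rw [← heq]
          exact (hT _ hball').1
        have hlastb : ‖((c'' (n-1) : ℚ) : ℚ_[p])‖ ≤ (p : ℝ) ^ K := by
          have := hbound ((p : ℝ) ^ (K+1)) hK1 (fun j _ hj2 => hb1 j hj2)
          rw [hdrop] at this
          exact le_trans this (by rw [max_eq_right hKk])
        refine ⟨c'', hc'', hit', hball'', ?_, ?_⟩
        · intro j hj
          by_cases hj1 : j + 1 < n
          · rw [hshift j hj1]
            exact hb1 (j+1) hj1
          · have : j = n - 1 := by omega
            subst this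
            refine le_trans hlastb ?_
            exact pow_le_pow_right₀ (le_of_lt (pR_one_lt (p := p))) (by omega)
        · intro j hj hjm
          by_cases hj1 : j + 1 < n
          · rw [hshift j hj1]
            exact hb2 (j+1) hj1 (by omega)
          · have : j = n - 1 := by omega
            subst this
            exact hlastb
    obtain ⟨c', hc', hit, hball', _, hb2⟩ := pass n (le_refl n)
    obtain ⟨k, hk⟩ := ih c' hc' (fun j hj => hb2 j hj (by omega)) hball'
    refine ⟨k + n, ?_⟩
    rw [Function.iterate_add_apply, hit, hk]

end Dynamics



section Final

variable {p : ℕ} [hp : Fact p.Prime] {β : ℚ_[p]} {a : ℕ → ℚ} {n : ℕ}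

lemma padicNorm_mul_p_le {x y : ℚ} (h : padicNorm p x < padicNorm p y) :
    padicNorm p x * p ≤ padicNorm p y := by
  by_cases hx : x = 0
  · rw [hx, padicNorm.zero, zero_mul]
    exact padicNorm.nonneg y
  · have hy : y ≠ 0 := by
      rintro rfl
      rw [padicNorm.zero] at h
      exact absurd h (not_lt.2 (padicNorm.nonneg x))
    rw [padicNorm.eq_zpow_of_nonzero hx, padicNorm.eq_zpow_of_nonzero hy] at h ⊢
    have h1lt : (1:ℚ) < (p:ℚ) := by exact_mod_cast hp.out.one_lt
    have huv : -padicValRat p x < -padicValRat p y := (zpow_lt_zpow_iff_right₀ h1lt).1 h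
    calc (p:ℚ) ^ (-padicValRat p x) * p = (p:ℚ) ^ (-padicValRat p x + 1) := by
          rw [zpow_add_one₀ (ne_of_gt (lt_trans one_pos h1lt))]
      _ ≤ (p:ℚ) ^ (-padicValRat p y) := zpow_le_zpow_right₀ (le_of_lt h1lt) (by omega)

lemma normA1 (hn : 1 ≤ n) (hβ : 1 < ‖β‖)
    (hrootEq : β ^ n = ∑ t ∈ Finset.Icc 1 n, ((a t : ℚ) : ℚ_[p]) * β ^ (n - t))
    (hajN : ∀ t, 2 ≤ t → t ≤ n → ‖((a t : ℚ) : ℚ_[p])‖ * p ≤ ‖((a 1 : ℚ) : ℚ_[p])‖)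
    (ha1big : 1 < ‖((a 1 : ℚ) : ℚ_[p])‖) :
    ‖((a 1 : ℚ) : ℚ_[p])‖ ≤ ‖β‖ := by
  by_contra hlt'
  push_neg at hlt'
  have hβpos : (0:ℝ) < ‖β‖ := lt_trans one_pos hβ
  have ha1pos : (0:ℝ) < ‖((a 1 : ℚ) : ℚ_[p])‖ := lt_trans one_pos ha1big
  have hpinv : (0:ℝ) < (p:ℝ)⁻¹ := by
    have := pR_pos (p := p); positivity
  set A1 : ℝ := ‖((a 1 : ℚ) : ℚ_[p])‖ with hA1def
  set C0 : ℝ := A1 * (p:ℝ)⁻¹ * ‖β‖ ^ (n - 2) with hC0def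
  have hC0nn : 0 ≤ C0 := by positivity
  have hpeel : ∑ t ∈ Finset.Icc 1 n, ((a t : ℚ) : ℚ_[p]) * β ^ (n - t)
      = ((a 1 : ℚ) : ℚ_[p]) * β ^ (n - 1)
        + ∑ t ∈ Finset.Icc 2 n, ((a t : ℚ) : ℚ_[p]) * β ^ (n - t) := by
    rw [← Finset.sum_erase_add (Finset.Icc 1 n) _ (Finset.mem_Icc.2 ⟨le_rfl, hn⟩)]
    rw [Finset.Icc_erase_left]
    rw [show Finset.Ioc 1 n = Finset.Icc 2 n from (Finset.Icc_add_one_left_eq_Ioc 1 n).symm]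
    ring
  have hterm : ∀ t ∈ Finset.Icc 2 n, ‖((a t : ℚ) : ℚ_[p]) * β ^ (n - t)‖ ≤ C0 := by
    intro t ht
    obtain ⟨ht2, htn⟩ := Finset.mem_Icc.1 ht
    rw [norm_mul, norm_pow]
    refine mul_le_mul ?_ ?_ (by positivity) (by positivity)
    · have := hajN t ht2 htn
      rw [← le_div_iff₀ (pR_pos (p := p))] at this
      rw [div_eq_mul_inv] at this
      exact this
    · exact pow_le_pow_right₀ (le_of_lt hβ) (by omega)
  have hsumb : ‖∑ t ∈ Finset.Icc 2 n, ((a t : ℚ) : ℚ_[p]) * β ^ (n - t)‖ ≤ C0 :=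
    norm_sum_le_max _ _ _ hC0nn hterm
  have heq2 : ((a 1 : ℚ) : ℚ_[p]) * β ^ (n - 1)
      = β ^ n - ∑ t ∈ Finset.Icc 2 n, ((a t : ℚ) : ℚ_[p]) * β ^ (n - t) := by
    rw [hrootEq, hpeel]
    ring
  have hfin : A1 * ‖β‖ ^ (n - 1) ≤ max (‖β‖ ^ n) C0 := by
    have : ‖((a 1 : ℚ) : ℚ_[p]) * β ^ (n - 1)‖ = A1 * ‖β‖ ^ (n - 1) := by
      rw [norm_mul, norm_pow]
    rw [← this, heq2]
    refine le_trans (norm_sub_le_max _ _) (max_le_max (le_of_eq (norm_pow _ _)) hsumb)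
  rcases max_cases (‖β‖ ^ n) C0 with ⟨hmax, _⟩ | ⟨hmax, _⟩ <;> rw [hmax] at hfin
  · have hn1 : ‖β‖ ^ n = ‖β‖ ^ (n - 1) * ‖β‖ := by
      rw [← pow_succ, show n - 1 + 1 = n by omega]
    rw [hn1] at hfin
    have : A1 ≤ ‖β‖ := by
      have hp1 : (0:ℝ) < ‖β‖ ^ (n - 1) := by positivity
      nlinarith [hfin]
    linarith
  · have hle : ‖β‖ ^ (n - 2) ≤ ‖β‖ ^ (n - 1) := pow_le_pow_right₀ (le_of_lt hβ) (by omega)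
    have hbig : A1 * ‖β‖ ^ (n - 1) ≤ A1 * (p:ℝ)⁻¹ * ‖β‖ ^ (n - 1) := by
      calc A1 * ‖β‖ ^ (n - 1) ≤ C0 := hfin
        _ = A1 * (p:ℝ)⁻¹ * ‖β‖ ^ (n - 2) := rfl
        _ ≤ A1 * (p:ℝ)⁻¹ * ‖β‖ ^ (n - 1) := by
            apply mul_le_mul_of_nonneg_left hle (by positivity)
    have hp1 : (0:ℝ) < ‖β‖ ^ (n - 1) := by positivity
    have hinvlt : (p:ℝ)⁻¹ < 1 := inv_lt_one_of_one_lt₀ (pR_one_lt (p := p))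
    have hpos : 0 < A1 * ‖β‖ ^ (n - 1) * (1 - (p:ℝ)⁻¹) :=
      mul_pos (mul_pos ha1pos hp1) (by linarith)
    nlinarith [hbig, hpos]

end Final

end PadicFinAux

/-- **sufficiency in the finiteness theorem.** Let `β ∈ ℚ_p` with `|β|_p > 1`
be a root of an irreducible `F = X^n − a_1 X^(n−1) − ⋯ − a_n ∈ ℚ[X]`, all `a_j ∈ ℤ[1/p]`,
such that: (i) all complex roots of `F` have archimedean absolute value `< 1` and
`|a_1|_p > 1` (β is Pisot–Chabauty); (ii) `|a_j|_p < |a_1|_p` for `2 ≤ j ≤ n`;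
(iii) `(−a_n, …, −a_1) ∈ 𝒟_n^0`.  Then every `z ∈ ℤ_p ∩ ℤ[1/p][β⁻¹]` has finite
beta-expansion: `T^[k] z = 0` for some `k`. -/
theorem padic_finiteness_sufficient (p : ℕ) [Fact p.Prime] (β : ℚ_[p]) (hβ : 1 < ‖β‖)
    (n : ℕ) (hn : 1 ≤ n) (a : ℕ → ℚ) (F : Polynomial ℚ)
    (hF : F = Polynomial.X ^ n -
      ∑ j ∈ Finset.Icc 1 n, Polynomial.C (a j) * Polynomial.X ^ (n - j))
    (hirr : Irreducible F)
    (hroot : Polynomial.aeval β F = 0)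
    (haZ : ∀ j, 1 ≤ j → j ≤ n → ∃ m : ℤ, ∃ k : ℕ, a j = (m : ℚ) / (p : ℚ) ^ k)
    (harch : ∀ w : ℂ, Polynomial.aeval w F = 0 → ‖w‖ < 1)
    (ha1 : 1 < padicNorm p (a 1))
    (haj : ∀ j, 2 ≤ j → j ≤ n → padicNorm p (a j) < padicNorm p (a 1))
    (hsrs : (fun i : Fin n => ((-(a (n - (i : ℕ))) : ℚ) : ℝ)) ∈ Dn0 n)
    (T : ℚ_[p] → ℚ_[p])
    (hT : ∀ z : ℚ_[p], ‖z‖ ≤ 1 → ‖T z‖ ≤ 1 ∧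
      ∃ d : ℚ, 0 ≤ d ∧ d < 1 ∧ (∃ m : ℤ, ∃ k : ℕ, d = (m : ℚ) / (p : ℚ) ^ k) ∧
        β * z = T z + ((d : ℚ) : ℚ_[p])) :
    ∀ z : ℚ_[p], ‖z‖ ≤ 1 → z ∈ Subring.closure {(p : ℚ_[p])⁻¹, β⁻¹} →
      ∃ k : ℕ, T^[k] z = 0 := by
    classical
  intro z hz hcl
  open PadicFinAux in
  -- extract the root equation
  have hrootEq : β ^ n = ∑ t ∈ Finset.Icc 1 n, ((a t : ℚ) : ℚ_[p]) * β ^ (n - t) := by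
    rw [hF] at hroot
    simp only [map_sub, map_pow, map_sum, map_mul, Polynomial.aeval_X, Polynomial.aeval_C,
      eq_ratCast] at hroot
    have := sub_eq_zero.1 hroot
    exact this
  have haZ' : ∀ j, 1 ≤ j → j ≤ n → PadicFinAux.pden p (a j) := haZ
  have hajN : ∀ j, 2 ≤ j → j ≤ n →
      ‖((a j : ℚ) : ℚ_[p])‖ * p ≤ ‖((a 1 : ℚ) : ℚ_[p])‖ := by
    intro j h2 h3
    rw [Padic.eq_padicNorm, Padic.eq_padicNorm]
    have := PadicFinAux.padicNorm_mul_p_le (p := p) (haj j h2 h3)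
    exact_mod_cast this
  have ha1big : 1 < ‖((a 1 : ℚ) : ℚ_[p])‖ := by
    rw [Padic.eq_padicNorm]
    exact_mod_cast ha1
  have hA1 := PadicFinAux.normA1 hn hβ hrootEq hajN ha1big
  have hajA : ∀ j, 2 ≤ j → j ≤ n → ‖((a j : ℚ) : ℚ_[p])‖ * p ≤ ‖β‖ :=
    fun j h2 h3 => le_trans (hajN j h2 h3) hA1
  have hT' : ∀ z : ℚ_[p], ‖z‖ ≤ 1 → ‖T z‖ ≤ 1 ∧
      ∃ d : ℚ, 0 ≤ d ∧ d < 1 ∧ PadicFinAux.pden p d ∧ β * z = T z + ((d : ℚ) : ℚ_[p]) := hT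
  have hβne : β ≠ 0 := by
    intro h
    rw [h, norm_zero] at hβ
    linarith
  -- closure argument
  have hWup : ∀ (N : ℕ) (x : ℚ_[p]), β ^ N * x ∈ PadicFinAux.Wset β a n →
      β ^ (N + 1) * x ∈ PadicFinAux.Wset β a n := by
    intro N x hx
    rw [pow_succ, mul_comm (β ^ N) β, mul_assoc]
    exact PadicFinAux.W_beta hn hrootEq haZ' hx
  have hWmono : ∀ (N M : ℕ) (x : ℚ_[p]), N ≤ M → β ^ N * x ∈ PadicFinAux.Wset β a n →
      β ^ M * x ∈ PadicFinAux.Wset β a n := by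
    intro N M x hNM hx
    obtain ⟨k, rfl⟩ : ∃ k, M = N + k := ⟨M - N, by omega⟩
    clear hNM
    induction k with
    | zero => exact hx
    | succ k ih => exact hWup _ _ ih
  have hP : ∃ N : ℕ, β ^ N * z ∈ PadicFinAux.Wset β a n := by
    refine Subring.closure_induction
      (p := fun x _ => ∃ N : ℕ, β ^ N * x ∈ PadicFinAux.Wset β a n) ?_ ?_ ?_ ?_ ?_ ?_ hcl
    · intro x hx
      rcases hx with hx | hx
      · refine ⟨0, ?_⟩
        rw [hx, pow_zero, one_mul]
        have : ((p : ℚ_[p]))⁻¹ = (((p : ℚ)⁻¹ : ℚ) : ℚ_[p]) := by push_cast; ring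
        rw [this]
        refine PadicFinAux.W_rat hn ⟨1, 1, by simp⟩
      · simp only [Set.mem_singleton_iff] at hx
        refine ⟨1, ?_⟩
        rw [hx, pow_one, mul_inv_cancel₀ hβne]
        simpa using PadicFinAux.W_rat (β := β) (a := a) hn (PadicFinAux.pden_one (p := p))
    · exact ⟨0, by simpa using PadicFinAux.W_zero⟩
    · refine ⟨0, ?_⟩
      rw [pow_zero, one_mul]
      simpa using PadicFinAux.W_rat (β := β) (a := a) hn (PadicFinAux.pden_one (p := p))
    · rintro x y _ _ ⟨N1, h1⟩ ⟨N2, h2⟩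
      refine ⟨max N1 N2, ?_⟩
      rw [mul_add]
      exact PadicFinAux.W_add (hWmono _ _ _ (le_max_left _ _) h1)
        (hWmono _ _ _ (le_max_right _ _) h2)
    · rintro x _ ⟨N1, h1⟩
      exact ⟨N1, by rw [mul_neg]; exact PadicFinAux.W_neg h1⟩
    · rintro x y _ _ ⟨N1, h1⟩ ⟨N2, h2⟩
      refine ⟨N1 + N2, ?_⟩
      rw [pow_add, show β ^ N1 * β ^ N2 * (x * y) = (β ^ N1 * x) * (β ^ N2 * y) by ring]
      exact PadicFinAux.W_mul hn hrootEq haZ' h1 h2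
  obtain ⟨N, hN⟩ := hP
  -- orbit reduction
  have horbit : ∀ m : ℕ, ‖T^[m] z‖ ≤ 1 ∧
      ∃ u, u ∈ PadicFinAux.Wset β a n ∧ T^[m] z = β ^ m * z + u := by
    intro m
    induction m with
    | zero => exact ⟨hz, 0, PadicFinAux.W_zero, by simp⟩
    | succ m ih =>
      obtain ⟨hb, u, hu, heq⟩ := ih
      obtain ⟨hTb, d, hd0, hd1, hdp, hbe⟩ := hT' _ hb
      refine ⟨by rw [Function.iterate_succ_apply']; exact hTb,
        β * u + -(((d : ℚ) : ℚ_[p])),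
        PadicFinAux.W_add (PadicFinAux.W_beta hn hrootEq haZ' hu)
          (PadicFinAux.W_neg (PadicFinAux.W_rat hn hdp)), ?_⟩
      rw [Function.iterate_succ_apply']
      have hTtr : T (T^[m] z) = β * T^[m] z - ((d : ℚ) : ℚ_[p]) := eq_sub_of_add_eq hbe.symm
      rw [hTtr, heq, pow_succ]
      ring
  obtain ⟨hb, u, hu, heq⟩ := horbit N
  have hWN : T^[N] z ∈ PadicFinAux.Wset β a n := by
    rw [heq]
    exact PadicFinAux.W_add hN hu
  obtain ⟨c, hc, hPhic⟩ := hWN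
  have hKex : ∃ K : ℕ, ∀ j, j < n → ‖((c j : ℚ) : ℚ_[p])‖ ≤ (p : ℝ) ^ K := by
    choose g hg using fun j => PadicFinAux.pden_norm_le (hc j)
    refine ⟨(Finset.range n).sup g, fun j hj => le_trans (hg j) ?_⟩
    exact pow_le_pow_right₀ (le_of_lt (PadicFinAux.pR_one_lt (p := p)))
      (Finset.le_sup (Finset.mem_range.2 hj))
  obtain ⟨K, hK⟩ := hKex
  have hball : ‖PadicFinAux.Phi β a n c‖ ≤ 1 := by
    rw [← hPhic]
    exact hb
  obtain ⟨k, hk⟩ := PadicFinAux.reach hn hβ hrootEq hajA haZ' hT' hsrs K c hc hK hball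
  refine ⟨k + N, ?_⟩
  rw [Function.iterate_add_apply, hPhic, hk]
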